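/- If p(x) = sum over j from 0 to k+1 of a_j x^j is a polynomial of degree k+1 over ℚ satisfying p(x+1) = p(x) + x^k for all x, with k ≥ 1, then the coefficient a_k equals -1/2. -/

import Mathlib

open Polynomial Finset in
theorem aux10 (p : Polynomial ℚ) (d n : ℕ) (hd : p.natDegree < d) :
    (p.comp (X + 1)).coeff n = ∑ i ∈ range d, p.coeff i * (i.choose n : ℚ) := by
  conv_lhs => rw [p.as_sum_range' d hd]
  simp [Polynomial.sum_comp, monomial_comp, finset_sum_coeff, coeff_X_add_one_pow, coeff_C_mul]

open Polynomial Finset in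
theorem stmt10 (k : ℕ) (hk : 1 ≤ k) (p : Polynomial ℚ)
    (hp : p.degree = (k + 1 : ℕ))
    (hfe : p.comp (X + 1) = p + X ^ k) :
    p.coeff k = -(1 / 2) := by
  obtain ⟨m, rfl⟩ : ∃ m, k = m + 1 := ⟨k - 1, by omega⟩
  have hnd : p.natDegree = m + 2 := by
    have := natDegree_eq_of_degree_eq_some hp; omega
  have hd : p.natDegree < m + 3 := by omega
  -- equation at coefficient k = m+1
  have e1 : (p.comp (X + 1)).coeff (m + 1) = (p + X ^ (m + 1)).coeff (m + 1) := by rw [hfe]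
  have e2 : (p.comp (X + 1)).coeff m = (p + X ^ (m + 1)).coeff m := by rw [hfe]
  rw [aux10 p (m+3) (m+1) hd] at e1
  rw [aux10 p (m+3) m hd] at e2
  rw [Finset.sum_range_succ, Finset.sum_range_succ] at e1 e2
  have hz1 : ∑ i ∈ range (m+1), p.coeff i * ((i.choose (m+1) : ℕ) : ℚ) = 0 := by
    apply Finset.sum_eq_zero
    intro i hi
    simp only [Finset.mem_range] at hi
    rw [Nat.choose_eq_zero_of_lt (by omega)]
    simp
  have hz2 : ∑ i ∈ range m, p.coeff i * ((i.choose m : ℕ) : ℚ) = 0 := by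
    apply Finset.sum_eq_zero
    intro i hi
    simp only [Finset.mem_range] at hi
    rw [Nat.choose_eq_zero_of_lt (by omega)]
    simp
  rw [Finset.sum_range_succ, hz2] at e2
  rw [hz1] at e1
  simp only [coeff_add, coeff_X_pow, if_pos rfl, Nat.choose_self, Nat.cast_one, mul_one,
    Nat.choose_succ_self_right] at e1 e2
  -- e1 : 0 + p.coeff (m+1) + p.coeff (m+2) * (m+2) = p.coeff (m+1) + 1
  have hc : (((m+2).choose m : ℕ) : ℚ) = (m+2) * (m+1) / 2 := by
    rw [← Nat.choose_symm (by omega : m ≤ m + 2)]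
    simp only [Nat.add_sub_cancel_left]
    rw [Nat.cast_choose_two]
    push_cast
    ring
  rw [hc] at e2
  have hne : ((m : ℚ) + 2) ≠ 0 := by positivity
  have ha : p.coeff (m + 2) = 1 / (m + 2) := by
    rw [if_pos trivial] at e1
    push_cast at e1
    rw [eq_div_iff hne]
    linear_combination e1
  rw [ha] at e2
  have hm1 : ((m : ℚ) + 1) ≠ 0 := by positivity
  -- e2: if m ≠ m+1 coeff cases
  have hmne : m ≠ m + 1 := by omega
  simp only [if_neg hmne, add_zero] at e2
  push_cast at e2
  field_simp at e2
  have h3 : ((m : ℚ) + 1) * (2 * p.coeff (m + 1) + 1) = 0 := by linear_combination e2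
  rcases mul_eq_zero.mp h3 with h | h
  · exact absurd h hm1
  · linarith
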